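/- For n ≥ 2 and α > 1, the function B(x) = α + x(1-α) + (n-1)x^{1-α} is strictly decreasing on (0, ∞) and satisfies B((n/(α-1))^{1/α}) > 0; hence the unique root x* of B satisfies x* ≥ (n/(α-1))^{1/α}. -/

import Mathlib

theorem B_decreasing_and_root_bound
    (n : ℕ) (hn : 2 ≤ n) (α : ℝ) (hα : 1 < α)
    (B : ℝ → ℝ)
    (hB : ∀ x : ℝ, B x = α + x * (1 - α) + (n - 1 : ℝ) * x ^ (1 - α)) :
    StrictAntiOn B (Set.Ioi (0 : ℝ)) ∧
    0 < B (((n : ℝ) / (α - 1)) ^ (1/α)) ∧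
    (∀ xstar : ℝ, 0 < xstar → B xstar = 0 →
      ((n : ℝ) / (α - 1)) ^ (1/α) ≤ xstar) := by
  have hα1 : (0:ℝ) < α - 1 := by linarith
  have hα0 : (0:ℝ) < α := by linarith
  have hn1 : (1:ℝ) ≤ (n:ℝ) - 1 := by
    have : (2:ℝ) ≤ (n:ℝ) := by exact_mod_cast hn
    linarith
  have hn2 : (2:ℝ) ≤ (n:ℝ) := by linarith
  have hnpos : (0:ℝ) < n := by linarith
  have hc : (0:ℝ) < (n:ℝ) / (α - 1) := div_pos hnpos hα1
  set c : ℝ := (n:ℝ) / (α - 1) with hcdef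
  set y : ℝ := c ^ (1/α) with hydef
  have hy : 0 < y := Real.rpow_pos_of_pos hc _
  -- strict antitone
  have hanti : StrictAntiOn B (Set.Ioi (0 : ℝ)) := by
    intro a ha b hb hab
    simp only [Set.mem_Ioi] at ha hb
    rw [hB a, hB b]
    have h1 : b * (1 - α) < a * (1 - α) := by nlinarith
    have h2 : b ^ (1 - α) < a ^ (1 - α) :=
      Real.rpow_lt_rpow_of_neg ha hab (by linarith)
    have h3 : ((n:ℝ) - 1) * b ^ (1 - α) ≤ ((n:ℝ) - 1) * a ^ (1 - α) :=
      mul_le_mul_of_nonneg_left h2.le (by linarith)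
    linarith
  -- key facts about y
  set t : ℝ := (α - 1) / n with htdef
  have ht : 0 < t := div_pos hα1 hnpos
  have hcinv : c⁻¹ = t := by
    rw [hcdef, htdef]; exact inv_div _ _
  have hyc : y ^ α = c := by
    rw [hydef, ← Real.rpow_mul hc.le, one_div, inv_mul_cancel₀ (ne_of_gt hα0), Real.rpow_one]
  have hsplit : y ^ (1 - α) = y * t := by
    rw [show (1 - α) = 1 + (-α) by ring, Real.rpow_add hy, Real.rpow_one,
      Real.rpow_neg hy.le, hyc, hcinv]
  have hrep : y ^ (1 - α) = t ^ ((α - 1)/α) := by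
    rw [hydef, ← Real.rpow_mul hc.le, ← hcinv, Real.inv_rpow hc.le, ← Real.rpow_neg hc.le]
    congr 1
    field_simp
    ring
  have hbound : t ^ ((α - 1)/α) < α := by
    have hp1 : (α - 1)/α ≤ 1 := by
      rw [div_le_one hα0]; linarith
    rcases le_or_gt t 1 with h | h
    · calc t ^ ((α - 1)/α) ≤ 1 :=
            Real.rpow_le_one ht.le h (by positivity)
        _ < α := hα
    · have : t ^ ((α - 1)/α) ≤ t ^ (1:ℝ) :=
        Real.rpow_le_rpow_of_exponent_le h.le hp1
      rw [Real.rpow_one] at this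
      have htα : t < α := by
        rw [htdef, div_lt_iff₀ hnpos]
        nlinarith
      linarith
  have hBy : 0 < B y := by
    rw [hB y, hsplit]
    have hyt : y * t < α := by rw [← hsplit, hrep]; exact hbound
    have halg : α + y * (1 - α) + ((n:ℝ) - 1) * (y * t) = α - y * t := by
      rw [htdef]
      field_simp
      ring
    rw [halg]
    linarith
  refine ⟨hanti, hBy, fun xstar hx hroot => ?_⟩
  by_contra hlt
  push_neg at hlt
  have := hanti (Set.mem_Ioi.mpr hx) (Set.mem_Ioi.mpr hy) hlt
  rw [hroot] at this
  linarith
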